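/- For nonnegative integers n, k with n ≤ 2^k, D(2^(k+1) + n − 1) = n + D(2^(k+1) − n − 1). -/

import Mathlib

/-- f m = (#1 digits) - (#0 digits) in the binary expansion of m. -/
def f (m : ℕ) : ℤ :=
  2 * ((Nat.digits 2 m).count 1 : ℤ) - ((Nat.digits 2 m).length : ℤ)

/-- Cumulated deficient binary digit sum (OEIS A268289), D 0 = 0. -/
def D (n : ℕ) : ℤ := ∑ m ∈ Finset.Icc 1 n, f m

lemma f_even (m : ℕ) (hm : 0 < m) : f (2 * m) = f m - 1 := by
  unfold f
  rw [Nat.digits_def' (by norm_num : 1 < 2) (by omega)]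
  rw [Nat.mul_mod_right, Nat.mul_div_cancel_left _ (by norm_num : 0 < 2)]
  simp [List.count_cons]
  ring

lemma f_odd (m : ℕ) : f (2 * m + 1) = f m + 1 := by
  unfold f
  rw [Nat.digits_def' (by norm_num : 1 < 2) (by omega)]
  have h1 : (2 * m + 1) % 2 = 1 := by omega
  have h2 : (2 * m + 1) / 2 = m := by omega
  rw [h1, h2]
  simp [List.count_cons]
  ring

lemma pair (k : ℕ) : ∀ i, i < 2 ^ k → f (2 ^ (k + 1) + i) + f (2 ^ (k + 1) - 1 - i) = 1 := by
  induction k with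
  | zero =>
    intro i hi
    interval_cases i
    have h1 : f 1 = 1 := by
      simp [f, Nat.digits_def' (show (1:ℕ) < 2 by norm_num) one_pos]
    have h2 : f 2 = f 1 - 1 := f_even 1 one_pos
    simp only [pow_one, Nat.add_zero, Nat.sub_zero]
    norm_num [h1, h2]
  | succ k ih =>
    intro i hi
    rcases Nat.even_or_odd i with ⟨j, hj⟩ | ⟨j, hj⟩
    · have hp2 : 2 ^ (k + 2) = 2 * 2 ^ (k + 1) := by ring
      have hj' : j < 2 ^ k := by omega
      have e1 : 2 ^ (k + 2) + i = 2 * (2 ^ (k + 1) + j) := by omega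
      have e2 : 2 ^ (k + 2) - 1 - i = 2 * (2 ^ (k + 1) - 1 - j) + 1 := by omega
      rw [e1, e2, f_even _ (by positivity), f_odd]
      have := ih j hj'
      omega
    · have hp2 : 2 ^ (k + 2) = 2 * 2 ^ (k + 1) := by ring
      have hj' : j < 2 ^ k := by omega
      have e1 : 2 ^ (k + 2) + i = 2 * (2 ^ (k + 1) + j) + 1 := by omega
      have e2 : 2 ^ (k + 2) - 1 - i = 2 * (2 ^ (k + 1) - 1 - j) := by omega
      have hpos : 0 < 2 ^ (k + 1) - 1 - j := by
        have : j + 1 < 2 ^ (k + 1) := by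
          have : 2 ^ k < 2 ^ (k + 1) := by
            have := Nat.pow_lt_pow_right (by norm_num : 1 < 2) (Nat.lt_succ_self k)
            omega
          omega
        omega
      rw [e1, e2, f_odd, f_even _ hpos]
      have := ih j hj'
      omega

lemma D_succ (m : ℕ) : D (m + 1) = D m + f (m + 1) := by
  unfold D
  rw [Finset.sum_Icc_succ_top (by omega)]

theorem stmt_15 (n k : ℕ) (h : n ≤ 2 ^ k) :
    D (2 ^ (k + 1) + n - 1) = n + D (2 ^ (k + 1) - n - 1) := by
  induction n with
  | zero => simp
  | succ n ih =>
    have hk : 2 ^ k < 2 ^ (k + 1) := by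
      have := Nat.pow_lt_pow_right (by norm_num : 1 < 2) (Nat.lt_succ_self k)
      omega
    have hn : n < 2 ^ k := by omega
    have e1 : 2 ^ (k + 1) + (n + 1) - 1 = (2 ^ (k + 1) + n - 1) + 1 := by omega
    have e2 : 2 ^ (k + 1) - n - 1 = (2 ^ (k + 1) - (n + 1) - 1) + 1 := by omega
    have e3 : (2 ^ (k + 1) + n - 1) + 1 = 2 ^ (k + 1) + n := by omega
    have e4 : (2 ^ (k + 1) - (n + 1) - 1) + 1 = 2 ^ (k + 1) - 1 - n := by omega
    have hp := pair k n hn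
    rw [e1, D_succ, ih (by omega), e2, D_succ] at *
    rw [e3, e4] at *
    push_cast
    omega
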